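/- Let A be a symmetric positive definite real 3×3 matrix, u ∈ ℝ³ a unit vector, γ > 0, and Θ a nonempty finite set of reals. Let c_ψ := 2λ_M^Ā, and let 0 < δ' < δ and 0 < ϱ < (δ − δ')/c_ψ². Define W(R,θ,ζ) := U(R,θ) + ϱ‖ζ − Ra(θ,u)·ψ(A·T(R,θ))‖² for ζ ∈ ℝ³. If v is a unit eigenvector of A such that U(Ra(π,v),0) − min_{θ'∈Θ} U(Ra(π,v),θ') > δ, then W(Ra(π,v),0,0) − min_{θ'∈Θ} W(Ra(π,v),θ',0) > δ'. -/

import Mathlib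

open Matrix

noncomputable section

abbrev M3 : Type := Matrix (Fin 3) (Fin 3) ℝ
abbrev V3 : Type := Fin 3 → ℝ

/-- skew-symmetric matrix associated to `x`: `skew x *ᵥ y = x ×₃ y`. -/
def skew (x : V3) : M3 :=
  !![0, -x 2, x 1; x 2, 0, -x 0; -x 1, x 0, 0]

/-- the special orthogonal group SO(3) as a subset of 3×3 matrices -/
def SO3 : Set M3 := {R | Rᵀ * R = 1 ∧ R.det = 1}

/-- Rodrigues formula -/
def Ra (θ : ℝ) (u : V3) : M3 :=
  1 + Real.sin θ • skew u + (1 - Real.cos θ) • (skew u * skew u)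

/-- `psi M = vec (P_a M)`, the vector part of the antisymmetric projection -/
def psi (M : M3) : V3 :=
  ![(M 2 1 - M 1 2) / 2, (M 0 2 - M 2 0) / 2, (M 1 0 - M 0 1) / 2]

/-- the angular-warping transformation `T(R,θ) = R · Ra(θ,u)` -/
def Tmap (u : V3) (R : M3) (θ : ℝ) : M3 := R * Ra θ u

/-- the potential function `U(R,θ)` on SO(3) × ℝ -/
def Ufun (A : M3) (u : V3) (γ : ℝ) (R : M3) (θ : ℝ) : ℝ :=
  (A * (1 - Tmap u R θ)).trace + γ / 2 * θ ^ 2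

/-- Euclidean norm on ℝ³ -/
def enorm3 (x : V3) : ℝ := Real.sqrt (x ⬝ᵥ x)

/-- Frobenius norm of a 3×3 matrix -/
def fnorm (M : M3) : ℝ := Real.sqrt ((Mᵀ * M).trace)

/-- `E(M) := (tr(M) I − Mᵀ)/2` -/
def Emap (M : M3) : M3 := (2⁻¹ : ℝ) • (M.trace • (1 : M3) - Mᵀ)

/-- `D_R(R,θ)` from Lemma 2 -/
def DR (A : M3) (u : V3) (R : M3) (θ : ℝ) : M3 :=
  Ra θ u * Emap (A * Tmap u R θ) * (Ra θ u)ᵀ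

/-- `D_θ(R,θ)` from Lemma 2 -/
def Dθ (A : M3) (u : V3) (R : M3) (θ : ℝ) : V3 :=
  (Ra θ u * Emap (A * Tmap u R θ)) *ᵥ u - skew (Ra θ u *ᵥ psi (A * Tmap u R θ)) *ᵥ u

/-- Δ(v,u) from the construction of the synergistic gap -/
def Delta (A : M3) (v u : V3) : ℝ :=
  u ⬝ᵥ ((A.trace • (1 : M3) - A - (2 * (v ⬝ᵥ A *ᵥ v)) • ((1 : M3) - vecMulVec v v)) *ᵥ u)

/-- `v` is a unit eigenvector of `A` -/
def IsUnitEigen (A : M3) (v : V3) : Prop :=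
  v ⬝ᵥ v = 1 ∧ ∃ lam : ℝ, A *ᵥ v = lam • v

/-- Ā := (tr(A) I − A)/2 -/
def Abar (A : M3) : M3 := (2⁻¹ : ℝ) • (A.trace • (1 : M3) - A)

/-- `lam` is an eigenvalue of `M` -/
def IsEigen (M : M3) (lam : ℝ) : Prop := ∃ w : V3, w ≠ 0 ∧ M *ᵥ w = lam • w


theorem skew_cube (u : V3) (hu : u ⬝ᵥ u = 1) : skew u * skew u * skew u = -(skew u) := by
  simp only [dotProduct, Fin.sum_univ_three] at hu
  ext i j
  fin_cases i <;> fin_cases j <;>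
    simp [skew, Matrix.mul_apply, Fin.sum_univ_three] <;>
    first
      | ring1
      | linear_combination (u 0) * hu
      | linear_combination (-(u 0)) * hu
      | linear_combination (u 1) * hu
      | linear_combination (-(u 1)) * hu
      | linear_combination (u 2) * hu
      | linear_combination (-(u 2)) * hu

theorem skew_transpose (u : V3) : (skew u)ᵀ = -(skew u) := by
  ext i j
  fin_cases i <;> fin_cases j <;> simp [skew]

theorem Ra_orth (θ : ℝ) (u : V3) (hu : u ⬝ᵥ u = 1) : (Ra θ u)ᵀ * Ra θ u = 1 := by
  have h3 := skew_cube u hu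
  set s := Real.sin θ with hs
  set b := 1 - Real.cos θ with hb
  set K := skew u with hK
  have hRt : (Ra θ u)ᵀ = 1 - s • K + b • (K * K) := by
    rw [Ra, transpose_add, transpose_add, transpose_smul, transpose_smul, transpose_one,
      transpose_mul, skew_transpose, ← hK, neg_mul_neg]
    module
  have h4 : (K * K) * (K * K) = -(K * K) := by
    calc (K * K) * (K * K) = (K * K * K) * K := by noncomm_ring
    _ = -(K * K) := by rw [h3]; noncomm_ring
  have h5 : K * (K * K) = -K := by rw [← mul_assoc, h3]
  have h6 : (K * K) * K = -K := by rw [mul_assoc, h5]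
  have hKP : K * Ra θ u = K + s • (K * K) - b • K := by
    rw [Ra, ← hK, mul_add, mul_add, mul_one, mul_smul_comm, mul_smul_comm, h5]
    module
  have hLP : (K * K) * Ra θ u = (K * K) - s • K - b • (K * K) := by
    rw [Ra, ← hK, mul_add, mul_add, mul_one, mul_smul_comm, mul_smul_comm, h6, h4]
    module
  rw [hRt, add_mul, sub_mul, one_mul, smul_mul_assoc, smul_mul_assoc, hKP, hLP, Ra, ← hK]
  match_scalars <;> first
    | ring1
    | linear_combination -Real.sin_sq_add_cos_sq θ
    | linear_combination (-2 : ℝ) * Real.sin_sq_add_cos_sq θ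

theorem mulVec_dot (R : M3) (hR : Rᵀ * R = 1) (x : V3) : (R *ᵥ x) ⬝ᵥ (R *ᵥ x) = x ⬝ᵥ x := by
  rw [Matrix.dotProduct_mulVec, ← Matrix.transpose_transpose R, Matrix.vecMul_transpose,
    Matrix.transpose_transpose, Matrix.mulVec_mulVec, hR, Matrix.one_mulVec]

theorem psi_bound (M : M3) : psi M ⬝ᵥ psi M ≤ (1/2) * (Mᵀ * M).trace := by
  simp only [psi, dotProduct, Fin.sum_univ_three, Matrix.trace, Matrix.diag, Matrix.mul_apply,
    Matrix.transpose_apply, Matrix.cons_val_zero, Matrix.cons_val_one, Matrix.head_cons,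
    Matrix.cons_val_two, Matrix.tail_cons]
  nlinarith [sq_nonneg (M 2 1 + M 1 2), sq_nonneg (M 0 2 + M 2 0), sq_nonneg (M 1 0 + M 0 1),
    sq_nonneg (M 0 0), sq_nonneg (M 1 1), sq_nonneg (M 2 2)]

theorem frob_inv (A T : M3) (hT : Tᵀ * T = 1) : ((A * T)ᵀ * (A * T)).trace = (Aᵀ * A).trace := by
  have hT' : T * Tᵀ = 1 := mul_eq_one_comm.mp hT
  calc ((A * T)ᵀ * (A * T)).trace = ((Tᵀ * (Aᵀ * A)) * T).trace := by
        congr 1; rw [Matrix.transpose_mul]; noncomm_ring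
    _ = (T * (Tᵀ * (Aᵀ * A))).trace := (Matrix.trace_mul_comm _ _)
    _ = (Aᵀ * A).trace := by rw [← Matrix.mul_assoc, hT', Matrix.one_mul]

theorem dot_self_nonneg' (x : V3) : 0 ≤ x ⬝ᵥ x :=
  Finset.sum_nonneg fun _ _ => mul_self_nonneg _

theorem spectral_data (A : M3) (hA : A.PosDef) :
    ∃ lam : Fin 3 → ℝ, (∀ i, 0 < lam i) ∧ A.trace = ∑ i, lam i ∧
      (Aᵀ * A).trace = ∑ i, (lam i)^2 ∧
      (∀ i, ∃ w : V3, w ≠ 0 ∧ A *ᵥ w = lam i • w) := by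
  have hH := hA.1
  have hspec := hH.spectral_theorem
  rw [Unitary.conjStarAlgAut_apply] at hspec
  set U : M3 := (hH.eigenvectorUnitary : M3) with hUdef
  set D : M3 := diagonal (RCLike.ofReal ∘ hH.eigenvalues) with hDdef
  have hUU : star U * U = 1 := Matrix.mem_unitaryGroup_iff'.mp (hH.eigenvectorUnitary).2
  have htr : A.trace = ∑ i, hH.eigenvalues i := by
    calc A.trace = (U * D * star U).trace := by rw [← hspec]
      _ = (star U * (U * D)).trace := (Matrix.trace_mul_comm _ _)
      _ = ((star U * U) * D).trace := by rw [Matrix.mul_assoc]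
      _ = D.trace := by rw [hUU, Matrix.one_mul]
      _ = ∑ i, hH.eigenvalues i := by simp [hDdef, Matrix.trace_diagonal]
  have hAT : Aᵀ = A := by
    rw [← Matrix.conjTranspose_eq_transpose_of_trivial]; exact hH
  refine ⟨hH.eigenvalues, hA.eigenvalues_pos, htr, ?_, ?_⟩
  · have hsq : A * A = U * (D * D) * star U := by
      calc A * A = (U * D * star U) * (U * D * star U) := by rw [← hspec]
        _ = U * D * ((star U * U) * (D * star U)) := by noncomm_ring
        _ = U * (D * D) * star U := by rw [hUU, Matrix.one_mul]; noncomm_ring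
    calc (Aᵀ * A).trace = (U * (D * D) * star U).trace := by rw [hAT, hsq]
      _ = (star U * (U * (D * D))).trace := (Matrix.trace_mul_comm _ _)
      _ = ((star U * U) * (D * D)).trace := by rw [Matrix.mul_assoc]
      _ = (D * D).trace := by rw [hUU, Matrix.one_mul]
      _ = ∑ i, (hH.eigenvalues i)^2 := by
          simp [hDdef, Matrix.diagonal_mul_diagonal, Matrix.trace_diagonal, sq]
  · intro i
    refine ⟨(hH.eigenvectorBasis i : V3), fun h0 => hH.eigenvectorBasis.orthonormal.ne_zero i ?_,
      hH.mulVec_eigenvectorBasis i⟩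
    ext j
    exact congrFun h0 j

theorem Abar_eigen (A : M3) (w : V3) (mu : ℝ) (hw : A *ᵥ w = mu • w) :
    Abar A *ᵥ w = ((A.trace - mu)/2) • w := by
  rw [Abar, Matrix.smul_mulVec, Matrix.sub_mulVec, Matrix.smul_mulVec,
    Matrix.one_mulVec, hw]
  module

theorem W_gap
    (A : M3) (hA : A.PosDef) (u : V3) (hu : u ⬝ᵥ u = 1) (γ : ℝ) (hγ : 0 < γ)
    (Θ : Finset ℝ) (hΘne : Θ.Nonempty)
    (lamM : ℝ) (hM : IsEigen (Abar A) lamM)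
    (hbound : ∀ lam : ℝ, IsEigen (Abar A) lam → lam ≤ lamM)
    (cψ : ℝ) (hcψ : cψ = 2 * lamM)
    (δ δ' ϱ : ℝ) (hδ'pos : 0 < δ') (hδδ' : δ' < δ) (hϱpos : 0 < ϱ)
    (hϱ : ϱ < (δ - δ') / cψ ^ 2)
    (W : M3 → ℝ → V3 → ℝ)
    (hW : ∀ (R : M3) (θ : ℝ) (ζ : V3), W R θ ζ = Ufun A u γ R θ +
        ϱ * ((ζ - Ra θ u *ᵥ psi (A * Tmap u R θ)) ⬝ᵥ (ζ - Ra θ u *ᵥ psi (A * Tmap u R θ))))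
    (v : V3) (hv : IsUnitEigen A v)
    (hgap : Ufun A u γ (Ra Real.pi v) 0 -
        Θ.inf' hΘne (fun θ' => Ufun A u γ (Ra Real.pi v) θ') > δ) :
    W (Ra Real.pi v) 0 0 - Θ.inf' hΘne (fun θ' => W (Ra Real.pi v) θ' 0) > δ' := by
  -- setup
  set R : M3 := Ra Real.pi v with hRdef
  have hRorth : Rᵀ * R = 1 := Ra_orth _ _ hv.1
  obtain ⟨lam, hlampos, htrace, htrsq, heigvec⟩ := spectral_data A hA
  -- eigenvalue bound: each lam i ≥ trace A - 2 lamM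
  have hlamlb : ∀ i, A.trace - 2 * lamM ≤ lam i := by
    intro i
    obtain ⟨w, hw0, hw⟩ := heigvec i
    have := hbound ((A.trace - lam i)/2) ⟨w, hw0, Abar_eigen A w (lam i) hw⟩
    linarith
  have hlam01 : lam 0 + lam 1 ≤ 2 * lamM := by
    have := hlamlb 2
    rw [htrace, Fin.sum_univ_three] at this
    linarith
  have hlam02 : lam 0 + lam 2 ≤ 2 * lamM := by
    have := hlamlb 1
    rw [htrace, Fin.sum_univ_three] at this
    linarith
  have hlam12 : lam 1 + lam 2 ≤ 2 * lamM := by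
    have := hlamlb 0
    rw [htrace, Fin.sum_univ_three] at this
    linarith
  have h0 := hlampos 0
  have h1 := hlampos 1
  have h2 := hlampos 2
  have hlamMpos : 0 < lamM := by linarith
  have hcψpos : 0 < cψ := by rw [hcψ]; linarith
  -- Frobenius bound: (1/2) tr(AᵀA) ≤ cψ²
  have hfrob : (1/2) * (Aᵀ * A).trace ≤ cψ^2 := by
    rw [htrsq, Fin.sum_univ_three, hcψ]
    nlinarith [sq_nonneg (lam 0 + lam 1), sq_nonneg (lam 1 + lam 2), mul_pos h0 h1,
      mul_pos h1 h2, mul_pos h0 h2]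
  -- key bound on the extra term for any θ'
  have hkey : ∀ θ' : ℝ,
      ((0 : V3) - Ra θ' u *ᵥ psi (A * Tmap u R θ')) ⬝ᵥ
        ((0 : V3) - Ra θ' u *ᵥ psi (A * Tmap u R θ')) ≤ cψ^2 := by
    intro θ'
    have hT : (Tmap u R θ')ᵀ * (Tmap u R θ') = 1 := by
      rw [Tmap, Matrix.transpose_mul, Matrix.mul_assoc, ← Matrix.mul_assoc Rᵀ R,
        hRorth, Matrix.one_mul, Ra_orth _ _ hu]
    have e1 : ((0 : V3) - Ra θ' u *ᵥ psi (A * Tmap u R θ')) ⬝ᵥ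
        ((0 : V3) - Ra θ' u *ᵥ psi (A * Tmap u R θ')) =
        (Ra θ' u *ᵥ psi (A * Tmap u R θ')) ⬝ᵥ (Ra θ' u *ᵥ psi (A * Tmap u R θ')) := by
      rw [zero_sub, neg_dotProduct, dotProduct_neg, neg_neg]
    rw [e1, mulVec_dot _ (Ra_orth _ _ hu)]
    calc psi (A * Tmap u R θ') ⬝ᵥ psi (A * Tmap u R θ')
        ≤ (1/2) * ((A * Tmap u R θ')ᵀ * (A * Tmap u R θ')).trace := psi_bound _
      _ = (1/2) * (Aᵀ * A).trace := by rw [frob_inv _ _ hT]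
      _ ≤ cψ^2 := hfrob
  -- ϱ cψ² < δ - δ'
  have hϱcψ : ϱ * cψ^2 < δ - δ' := by
    have hc2 : 0 < cψ^2 := by positivity
    calc ϱ * cψ^2 < ((δ - δ')/cψ^2) * cψ^2 := by
          exact mul_lt_mul_of_pos_right hϱ hc2
      _ = δ - δ' := by field_simp
  -- compare inf's
  obtain ⟨θs, hθsmem, hθseq⟩ := Finset.exists_mem_eq_inf' hΘne (fun θ' => Ufun A u γ R θ')
  have hinfW : Θ.inf' hΘne (fun θ' => W R θ' 0) ≤
      Θ.inf' hΘne (fun θ' => Ufun A u γ R θ') + ϱ * cψ^2 := by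
    calc Θ.inf' hΘne (fun θ' => W R θ' 0) ≤ W R θs 0 := Finset.inf'_le _ hθsmem
      _ ≤ Ufun A u γ R θs + ϱ * cψ^2 := by
          rw [hW]
          have := hkey θs
          nlinarith [hkey θs]
      _ = Θ.inf' hΘne (fun θ' => Ufun A u γ R θ') + ϱ * cψ^2 := by rw [hθseq]
  have hW0 : Ufun A u γ R 0 ≤ W R 0 0 := by
    rw [hW]
    nlinarith [dot_self_nonneg' ((0 : V3) - Ra 0 u *ᵥ psi (A * Tmap u R 0))]
  linarith
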